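/- For every locally analytic function g : ℤ_p^× → ℚ_p there exists a locally analytic function f : ℤ_p^× → ℚ_p such that x·f′(x) = g(x) for all x ∈ ℤ_p^×. That is, the operator f ↦ x·f′ is surjective on the space of locally analytic ℚ_p-valued functions on ℤ_p^×. -/

import Mathlib

set_option maxHeartbeats 1000000
open Filter Metric FormalMultilinearSeries

section Aux
variable {p : ℕ} [hp : Fact p.Prime]

variable {p : ℕ} [hp : Fact p.Prime]

lemma one_div_le_norm_natCast (m : ℕ) (hm : m ≠ 0) :
    (1 : ℝ) / m ≤ ‖(m : ℚ_[p])‖ := by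
  set v := m.factorization p with hv
  set u := m / p ^ v with hu
  have hdecomp : m = p ^ v * u := (Nat.ordProj_mul_ordCompl_eq_self m p).symm
  have hpu : ¬ (p : ℤ) ∣ (u : ℤ) := by
    exact_mod_cast fun h => (Nat.not_dvd_ordCompl hp.out hm) (by exact_mod_cast h)
  have hu1 : ‖((u : ℤ) : ℚ_[p])‖ = 1 :=
    le_antisymm (Padic.norm_int_le_one _)
      (not_lt.mp fun h => hpu ((Padic.norm_intCast_lt_one_iff).mp h))
  have hcast : (m : ℚ_[p]) = (p : ℚ_[p]) ^ v * ((u : ℤ) : ℚ_[p]) := by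
    rw [hdecomp]; push_cast; ring
  rw [hcast, norm_mul, norm_pow, Padic.norm_p, hu1, mul_one]
  have hum : (1:ℝ) ≤ (u:ℝ) := by
    have : u ≠ 0 := (Nat.ordCompl_pos p hm).ne'
    exact_mod_cast Nat.one_le_iff_ne_zero.mpr this
  have hppos : (0:ℝ) < (p:ℝ) ^ v := by
    have : (0:ℝ) < (p:ℝ) := by exact_mod_cast hp.out.pos
    positivity
  rw [hdecomp]
  push_cast
  rw [inv_pow, one_div]
  rw [inv_le_inv₀ (by nlinarith) hppos]
  nlinarith

lemma exists_local_antideriv (h : ℚ_[p] → ℚ_[p]) (x : ℚ_[p]) (hx : AnalyticAt ℚ_[p] h x) :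
    ∃ (r : ℝ) (F : ℚ_[p] → ℚ_[p]), 0 < r ∧
      ∀ y ∈ Metric.ball x r, AnalyticAt ℚ_[p] F y ∧ HasDerivAt F (h y) y := by
  obtain ⟨P, rP, hP⟩ : ∃ P rP, HasFPowerSeriesOnBall h P x rP := by
    obtain ⟨P, hP⟩ := hx
    obtain ⟨rP, hP⟩ := hP
    exact ⟨P, rP, hP⟩
  -- choose ρ : ℝ≥0 with 0 < ρ, ρ ≤ 1, ↑ρ < rP
  obtain ⟨ρ₀, hρ₀pos, hρ₀lt⟩ : ∃ ρ₀ : NNReal, 0 < ρ₀ ∧ (ρ₀ : ENNReal) < rP := by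
    rcases ENNReal.lt_iff_exists_nnreal_btwn.mp hP.r_pos with ⟨ρ₀, h1, h2⟩
    exact ⟨ρ₀, by exact_mod_cast h1, h2⟩
  set ρ : NNReal := min ρ₀ 1 with hρ
  have hρpos : 0 < ρ := lt_min hρ₀pos one_pos
  have hρ1 : ρ ≤ 1 := min_le_right _ _
  have hρlt : (ρ : ENNReal) < rP := lt_of_le_of_lt (by exact_mod_cast min_le_left ρ₀ 1) hρ₀lt
  -- coefficient bound
  obtain ⟨C, hCpos, hC⟩ : ∃ C > 0, ∀ n, ‖P n‖ * (ρ:ℝ) ^ n ≤ C :=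
    P.norm_mul_pow_le_of_lt_radius (lt_of_lt_of_le hρlt hP.r_le)
  set a : ℕ → ℚ_[p] := fun n => P.coeff n with ha
  set b : ℕ → ℚ_[p] := fun n => Nat.rec 0 (fun k _ => a k / (k + 1)) n with hb
  have hb0 : b 0 = 0 := rfl
  have hbs : ∀ k, b (k+1) = a k / (k+1) := fun k => rfl
  set q : FormalMultilinearSeries ℚ_[p] ℚ_[p] ℚ_[p] := ofScalars ℚ_[p] b with hq
  set ρ' : NNReal := ρ * (p : NNReal)⁻¹ with hρ'
  have hppos : (0:ℝ) < (p:ℝ) := by exact_mod_cast hp.out.pos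
  have hρ'pos : 0 < ρ' := by
    apply mul_pos hρpos
    rw [inv_pos]
    exact_mod_cast hp.out.pos
  have hρ'le : ρ' ≤ ρ := by
    calc ρ' = ρ * (p:NNReal)⁻¹ := rfl
    _ ≤ ρ * 1 := by
        apply mul_le_mul_right _ _
        rw [inv_le_one_iff₀]
        right; exact_mod_cast hp.out.one_le
    _ = ρ := mul_one ρ
  -- radius bound for q
  have hrad : (ρ' : ENNReal) ≤ q.radius := by
    apply q.le_radius_of_bound C
    intro n
    have hqn : ‖q n‖ = ‖b n‖ := ofScalars_norm _ _ _
    cases n with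
    | zero => simp [hqn, hb0]; positivity
    | succ k =>
      rw [hqn, hbs k]
      have hnorm_ne : ‖((k+1 : ℕ) : ℚ_[p])‖ ≠ 0 := by
        simp [Nat.cast_add_one_ne_zero]
      have hkc : ((k:ℚ_[p]) + 1) = ((k+1 : ℕ) : ℚ_[p]) := by push_cast; ring
      have hdivle : ‖a k / ((k:ℚ_[p]) + 1)‖ ≤ ‖a k‖ * (k+1 : ℝ) := by
        rw [norm_div, hkc, div_le_iff₀ (lt_of_le_of_ne (norm_nonneg _) (Ne.symm hnorm_ne))]
        calc ‖a k‖ = ‖a k‖ * (1 : ℝ) := (mul_one _).symm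
        _ = ‖a k‖ * ((k+1 : ℝ) * ((1:ℝ)/(k+1))) := by
            rw [mul_one_div_cancel]; positivity
        _ ≤ ‖a k‖ * ((k+1:ℝ) * ‖((k+1:ℕ) : ℚ_[p])‖) := by
            apply mul_le_mul_of_nonneg_left _ (norm_nonneg _)
            apply mul_le_mul_of_nonneg_left _ (by positivity)
            exact_mod_cast one_div_le_norm_natCast (k+1) (Nat.succ_ne_zero k)
        _ = ‖a k‖ * (k+1:ℝ) * ‖((k+1:ℕ) : ℚ_[p])‖ := by ring
      have hcoef : ‖a k‖ ≤ ‖P k‖ := le_of_eq (P.norm_apply_eq_norm_coef (n := k)).symm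
      have hρ'real : ((ρ' : NNReal) : ℝ) = (ρ:ℝ) / (p:ℝ) := by
        rw [hρ']
        push_cast
        rw [div_eq_mul_inv]
      have hkp : (k+1 : ℝ) ≤ (p:ℝ)^(k+1) := by
        have h2 : (k+1 : ℕ) < 2^(k+1) := Nat.lt_two_pow_self
        have h2p : (2:ℕ)^(k+1) ≤ p^(k+1) := Nat.pow_le_pow_left hp.out.two_le _
        have := lt_of_lt_of_le h2 h2p
        exact_mod_cast this.le
      calc ‖a k / ((k:ℚ_[p]) + 1)‖ * ((ρ' : NNReal) : ℝ) ^ (k+1)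
          ≤ (‖a k‖ * (k+1:ℝ)) * ((ρ' : NNReal) : ℝ) ^ (k+1) := by
            apply mul_le_mul_of_nonneg_right hdivle (by positivity)
        _ = (‖a k‖ * (ρ:ℝ)^(k+1)) * ((k+1:ℝ) / (p:ℝ)^(k+1)) := by
            rw [hρ'real, div_pow]; field_simp
        _ ≤ (‖a k‖ * (ρ:ℝ)^(k+1)) * 1 := by
            apply mul_le_mul_of_nonneg_left _ (by positivity)
            rw [div_le_one (by positivity)]
            exact hkp
        _ = ‖a k‖ * (ρ:ℝ)^k * (ρ:ℝ) := by ring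
        _ ≤ ‖P k‖ * (ρ:ℝ)^k * 1 := by
            apply mul_le_mul (mul_le_mul_of_nonneg_right hcoef (by positivity)) _ (by positivity) (by positivity)
            exact_mod_cast hρ1
        _ = ‖P k‖ * (ρ:ℝ)^k := mul_one _
        _ ≤ C := hC k
  set F : ℚ_[p] → ℚ_[p] := fun y => q.sum (y - x) with hF
  have hQ : HasFPowerSeriesOnBall F q x (ρ' : ENNReal) := by
    refine ⟨hrad, by exact_mod_cast hρ'pos, ?_⟩
    intro y hy
    have hmem : y ∈ Metric.eball (0:ℚ_[p]) q.radius := lt_of_lt_of_le hy hrad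
    have := q.hasSum hmem
    simpa [hF, add_sub_cancel_left] using this
  refine ⟨(ρ' : ℝ), F, by exact_mod_cast hρ'pos, ?_⟩
  intro y hy
  have hyE : y ∈ Metric.eball x (ρ' : ENNReal) := by
    rw [Metric.emetric_ball_nnreal]; exact hy
  have hdF : DifferentiableAt ℚ_[p] F y := (hQ.analyticAt_of_mem hyE).differentiableAt
  have hderiv : deriv F y = h y := by
    rcases eq_or_ne y x with rfl | hne
    · have h1 : deriv F y = q.coeff 1 := hQ.hasFPowerSeriesAt.deriv
      have h2 : P.coeff 0 = h y := hP.hasFPowerSeriesAt.coeff_zero 1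
      rw [h1, ← h2]
      have h3 : q.coeff 1 = b 1 := by
        show q 1 1 = b 1
        have := ofScalars_apply_eq (E := ℚ_[p]) b (1 : ℚ_[p]) 1
        simpa [hq] using this
      rw [h3]
      have hb1 : b 1 = a 0 := by simpa using hbs 0
      rw [hb1]
    · set z := y - x with hz
      have hzne : z ≠ 0 := sub_ne_zero.mpr hne
      have hz0 : z ∈ Metric.eball (0:ℚ_[p]) (ρ':ENNReal) := by
        rw [Metric.emetric_ball_nnreal, Metric.mem_ball, dist_zero_right, hz, ← dist_eq_norm]
        exact hy
      have hxz : x + z = y := by rw [hz]; ring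
      have hsum1 : HasSum (fun n => q.derivSeries n fun _ => z) (fderiv ℚ_[p] F (x + z)) :=
        hQ.fderiv.hasSum hz0
      have hsum2 : HasSum (fun n => (q.derivSeries n fun _ => z) z) (fderiv ℚ_[p] F (x + z) z) :=
        hsum1.mapL (ContinuousLinearMap.apply ℚ_[p] ℚ_[p] z)
      have hterm : ∀ n : ℕ, (q.derivSeries n fun _ => z) z = a n * z^(n+1) := by
        intro n
        rw [q.derivSeries_apply_diag n z]
        have h4 : q (n+1) (fun _ => z) = b (n+1) • z ^ (n+1) :=
          ofScalars_apply_eq (E := ℚ_[p]) b z (n+1)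
        rw [h4, hbs n]
        have hne' : ((n:ℚ_[p])+1) ≠ 0 := Nat.cast_add_one_ne_zero n
        rw [smul_eq_mul, nsmul_eq_mul]
        push_cast
        field_simp
      have hsum2' : HasSum (fun n => a n * z^(n+1)) (fderiv ℚ_[p] F (x+z) z) := by
        have h5 : (fun n => (q.derivSeries n fun _ => z) z) = fun n => a n * z^(n+1) :=
          funext hterm
        rwa [h5] at hsum2
      have hzrP : z ∈ Metric.eball (0:ℚ_[p]) rP :=
        lt_of_lt_of_le hz0 (le_trans (by exact_mod_cast hρ'le) hρlt.le)
      have hsumh : HasSum (fun n => a n * z^n) (h (x+z)) := by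
        have h6 := hP.hasSum hzrP
        have h7 : (fun n => P n fun _ => z) = fun n => a n * z^n := by
          funext n
          rw [P.apply_eq_pow_smul_coeff, smul_eq_mul, mul_comm]
        rwa [h7] at h6
      have hsumh' : HasSum (fun n => a n * z^(n+1)) (z * h (x+z)) := by
        have h8 := hsumh.mul_left z
        have h9 : (fun n => z * (a n * z ^ n)) = fun n => a n * z ^ (n+1) := by
          funext n; ring
        rwa [h9] at h8
      have heq : fderiv ℚ_[p] F (x+z) z = z * h (x+z) := hsum2'.unique hsumh'
      rw [hxz] at heq
      have hfd : fderiv ℚ_[p] F y z = z * deriv F y := by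
        have h10 : fderiv ℚ_[p] F y z = z • fderiv ℚ_[p] F y 1 := by
          rw [← ContinuousLinearMap.map_smul, smul_eq_mul, mul_one]
        rw [h10, fderiv_apply_one_eq_deriv, smul_eq_mul]
      rw [hfd] at heq
      exact mul_left_cancel₀ hzne heq
  constructor
  · exact hQ.analyticAt_of_mem hyE
  · exact hderiv ▸ hdF.hasDerivAt

end Aux


open scoped Classical in
noncomputable def padicGlue {p : ℕ} [Fact p.Prime] (r : ℚ_[p] → ℝ) (F : ℚ_[p] → ℚ_[p] → ℚ_[p]) :
    List ℚ_[p] → ℚ_[p] → ℚ_[p]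
  | [], _ => 0
  | c :: l, y => if y ∈ Metric.ball c (r c) then F c y else padicGlue r F l y

lemma padicGlue_eventuallyEq {p : ℕ} [Fact p.Prime] (r : ℚ_[p] → ℝ) (F : ℚ_[p] → ℚ_[p] → ℚ_[p])
    (l : List ℚ_[p]) (y : ℚ_[p]) (hy : ∃ c ∈ l, y ∈ Metric.ball c (r c)) :
    ∃ c ∈ l, y ∈ Metric.ball c (r c) ∧ padicGlue r F l =ᶠ[nhds y] F c := by
  classical
  induction l with
  | nil => simp at hy
  | cons c l ih =>
    by_cases hc : y ∈ Metric.ball c (r c)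
    · refine ⟨c, List.mem_cons_self, hc, ?_⟩
      filter_upwards [isOpen_ball.mem_nhds hc] with z hz
      simp [padicGlue, hz]
    · obtain ⟨c', hc'l, hc'⟩ := hy
      rcases List.mem_cons.mp hc'l with rfl | hc'l
      · exact absurd hc' hc
      obtain ⟨c'', hc''l, hc''m, hc''ev⟩ := ih ⟨c', hc'l, hc'⟩
      refine ⟨c'', List.mem_cons_of_mem _ hc''l, hc''m, ?_⟩
      have hop : IsOpen ((Metric.ball c (r c))ᶜ) :=
        (IsUltrametricDist.isClopen_ball c (r c)).isClosed.isOpen_compl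
      have hev2 : ∀ᶠ z in nhds y, padicGlue r F (c :: l) z = padicGlue r F l z := by
        filter_upwards [hop.mem_nhds hc] with z hz
        have hz' : z ∉ Metric.ball c (r c) := hz
        simp only [padicGlue, if_neg hz']
      exact (Filter.EventuallyEq.trans hev2 hc''ev)

/-- The operator `f ↦ x·f′` is surjective on locally analytic functions on
`ℤ_p^× = {x : ℚ_p | ‖x‖ = 1}`: for every `g` analytic at each point of `ℤ_p^×`
there is `f`, analytic at each point of `ℤ_p^×`, with `x·f′(x) = g(x)` there. -/
theorem stmt8 (p : ℕ) [Fact p.Prime] (g : ℚ_[p] → ℚ_[p])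
    (hg : ∀ x : ℚ_[p], ‖x‖ = 1 → AnalyticAt ℚ_[p] g x) :
    ∃ f : ℚ_[p] → ℚ_[p], (∀ x : ℚ_[p], ‖x‖ = 1 → AnalyticAt ℚ_[p] f x) ∧
      ∀ x : ℚ_[p], ‖x‖ = 1 → x * deriv f x = g x := by
  classical
  set h : ℚ_[p] → ℚ_[p] := fun y => g y * y⁻¹ with hh
  have hha : ∀ x : ℚ_[p], ‖x‖ = 1 → AnalyticAt ℚ_[p] h x := by
    intro x hx
    have hx0 : x ≠ 0 := by
      intro h0; rw [h0, norm_zero] at hx; norm_num at hx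
    exact (hg x hx).mul ((analyticAt_id : AnalyticAt ℚ_[p] _root_.id x).inv hx0)
  have key : ∀ x : ℚ_[p], ∃ rF : ℝ × (ℚ_[p] → ℚ_[p]), 0 < rF.1 ∧
      (‖x‖ = 1 → ∀ y ∈ Metric.ball x rF.1,
        AnalyticAt ℚ_[p] rF.2 y ∧ HasDerivAt rF.2 (h y) y) := by
    intro x
    by_cases hx : ‖x‖ = 1
    · obtain ⟨r, F, hr, hF⟩ := exists_local_antideriv h x (hha x hx)
      exact ⟨(r, F), hr, fun _ => hF⟩
    · exact ⟨(1, 0), one_pos, fun hc => absurd hc hx⟩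
  choose rF hpos hloc using key
  set r : ℚ_[p] → ℝ := fun c => (rF c).1 with hr
  set F : ℚ_[p] → ℚ_[p] → ℚ_[p] := fun c => (rF c).2 with hFdef
  have hS : IsCompact (Metric.sphere (0:ℚ_[p]) 1) := isCompact_sphere 0 1
  obtain ⟨t, ht1, ht2⟩ := hS.elim_nhds_subcover (fun c => Metric.ball c (r c))
    (fun x _ => Metric.ball_mem_nhds x (hpos x))
  set f : ℚ_[p] → ℚ_[p] := padicGlue r F t.toList with hf
  have main : ∀ x : ℚ_[p], ‖x‖ = 1 →
      AnalyticAt ℚ_[p] f x ∧ deriv f x = h x := by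
    intro x hx
    have hxS : x ∈ Metric.sphere (0:ℚ_[p]) 1 := by
      rwa [mem_sphere_zero_iff_norm]
    obtain ⟨c₀, hc₀t, hc₀b⟩ : ∃ c ∈ t, x ∈ Metric.ball c (r c) := by
      simpa using ht2 hxS
    obtain ⟨c, hcl, hcb, hev⟩ := padicGlue_eventuallyEq r F t.toList x
      ⟨c₀, Finset.mem_toList.mpr hc₀t, hc₀b⟩
    have hct : c ∈ t := Finset.mem_toList.mp hcl
    have hcS : ‖c‖ = 1 := by
      have := ht1 c hct
      rwa [mem_sphere_zero_iff_norm] at this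
    obtain ⟨han, hder⟩ := hloc c hcS x hcb
    refine ⟨han.congr hev.symm, ?_⟩
    rw [hev.deriv_eq, hder.deriv]
  refine ⟨f, fun x hx => (main x hx).1, fun x hx => ?_⟩
  rw [(main x hx).2]
  have hx0 : x ≠ 0 := by
    intro h0; rw [h0, norm_zero] at hx; norm_num at hx
  rw [hh]
  field_simp
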